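/- Let Λ = U_n ⊙ ⋯ ⊙ U_1 and Λ̄ = Ū_n ⊙ ⋯ ⊙ Ū_1 be Khatri-Rao products where each U_i, Ū_i ∈ ℝ^{d_i × R} has columns of Euclidean norm at most 1. If ‖u_r^{(i)} − ū_r^{(i)}‖₂ ≤ ε/(n√R) for every column index r and every mode i, then ‖Λ − Λ̄‖_F ≤ ε. -/

import Mathlib

open Finset

lemma tele_aux : ∀ (n : ℕ) (p q : Fin n → ℝ),
    (∏ i, p i) - ∏ i, q i
      = ∑ k, ∏ i, (if i < k then p i else if i = k then p i - q i else q i) := by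
  intro n
  induction n with
  | zero => intro p q; simp
  | succ m ih =>
    intro p q
    rw [Fin.prod_univ_castSucc, Fin.prod_univ_castSucc, Fin.sum_univ_castSucc]
    have hterm : ∀ k : Fin m,
        (∏ i : Fin (m+1),
            (if i < k.castSucc then p i else if i = k.castSucc then p i - q i else q i))
          = (∏ i : Fin m, (if i < k then p i.castSucc
              else if i = k then p i.castSucc - q i.castSucc else q i.castSucc))
            * q (Fin.last m) := by
      intro k
      rw [Fin.prod_univ_castSucc]
      congr 1
      · refine Finset.prod_congr rfl fun i _ => ?_
        simp [Fin.castSucc_lt_castSucc_iff, Fin.castSucc_inj]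
      · rw [if_neg ((Fin.castSucc_lt_last k).asymm), if_neg ((Fin.castSucc_lt_last k).ne')]
    have hlast : (∏ i : Fin (m+1),
        (if i < Fin.last m then p i else if i = Fin.last m then p i - q i else q i))
        = (∏ i : Fin m, p i.castSucc) * (p (Fin.last m) - q (Fin.last m)) := by
      rw [Fin.prod_univ_castSucc]
      congr 1
      · refine Finset.prod_congr rfl fun i _ => ?_
        rw [if_pos (Fin.castSucc_lt_last i)]
      · rw [if_neg (lt_irrefl _), if_pos rfl]
    rw [hlast]
    rw [Finset.sum_congr rfl fun k _ => hterm k, ← Finset.sum_mul,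
      ← ih (fun i => p i.castSucc) (fun i => q i.castSucc)]
    ring

lemma col_bound {n : ℕ} (d : Fin n → ℕ) (a b : ∀ i, Fin (d i) → ℝ) (δ : ℝ) (hδ : 0 ≤ δ)
    (ha : ∀ i, ∑ j, (a i j) ^ 2 ≤ 1) (hb : ∀ i, ∑ j, (b i j) ^ 2 ≤ 1)
    (hab : ∀ i, ∑ j, (a i j - b i j) ^ 2 ≤ δ ^ 2) :
    Real.sqrt (∑ x : ∀ i, Fin (d i), ((∏ i, a i (x i)) - ∏ i, b i (x i)) ^ 2)
      ≤ n * δ := by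
  classical
  set g : Fin n → ∀ i, Fin (d i) → ℝ :=
    fun k i j => if i < k then a i j else if i = k then a i j - b i j else b i j with hg
  set P : Fin n → EuclideanSpace ℝ (∀ i, Fin (d i)) :=
    fun k => WithLp.toLp 2 (fun x => ∏ i, g k i (x i)) with hP
  have hnormP : ∀ k, ‖P k‖ ≤ δ := by
    intro k
    rw [EuclideanSpace.norm_eq]
    have h1 : ∀ x : ∀ i, Fin (d i), ‖P k x‖ ^ 2 = ∏ i, (g k i (x i)) ^ 2 := by
      intro x
      rw [Real.norm_eq_abs, sq_abs, hP, PiLp.toLp_apply, Finset.prod_pow]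
    rw [Finset.sum_congr rfl fun x _ => h1 x, ← Fintype.prod_sum fun i j => g k i j ^ 2]
    have hSnn : ∀ i, (0:ℝ) ≤ ∑ j, (g k i j) ^ 2 :=
      fun i => Finset.sum_nonneg fun j _ => sq_nonneg _
    have hprod : (∏ i, ∑ j, (g k i j) ^ 2)
        = (∑ j, (g k k j) ^ 2) * ∏ i ∈ univ.erase k, ∑ j, (g k i j) ^ 2 :=
      (Finset.mul_prod_erase _ _ (mem_univ k)).symm
    have hk : (∑ j, (g k k j) ^ 2) ≤ δ ^ 2 := by
      simpa [hg] using hab k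
    have hrest : (∏ i ∈ univ.erase k, ∑ j, (g k i j) ^ 2) ≤ 1 := by
      refine Finset.prod_le_one (fun i _ => hSnn i) fun i hi => ?_
      have hik : i ≠ k := (Finset.mem_erase.mp hi).1
      by_cases h : i < k
      · simpa [hg, h] using ha i
      · simpa [hg, h, hik] using hb i
    calc Real.sqrt (∏ i, ∑ j, (g k i j) ^ 2)
        ≤ Real.sqrt (δ ^ 2) := by
          apply Real.sqrt_le_sqrt
          rw [hprod]
          calc (∑ j, (g k k j) ^ 2) * ∏ i ∈ univ.erase k, ∑ j, (g k i j) ^ 2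
              ≤ δ ^ 2 * 1 := by
                exact mul_le_mul hk hrest (Finset.prod_nonneg fun i _ => hSnn i)
                  (sq_nonneg _)
            _ = δ ^ 2 := mul_one _
      _ = δ := Real.sqrt_sq hδ
  set F : EuclideanSpace ℝ (∀ i, Fin (d i)) :=
    WithLp.toLp 2 (fun x => (∏ i, a i (x i)) - ∏ i, b i (x i)) with hF
  have hFsum : F = ∑ k, P k := by
    ext x
    have : (∑ k, P k) x = ∑ k, P k x := by
      show (WithLp.ofLp (∑ k, P k)) x = _
      rw [WithLp.ofLp_sum, Finset.sum_apply]
    rw [hF, this]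
    exact tele_aux n (fun i => a i (x i)) (fun i => b i (x i))
  have hgoal : Real.sqrt (∑ x : ∀ i, Fin (d i),
      ((∏ i, a i (x i)) - ∏ i, b i (x i)) ^ 2) = ‖F‖ := by
    rw [EuclideanSpace.norm_eq]
    congr 1
    refine Finset.sum_congr rfl fun x _ => ?_
    rw [hF, PiLp.toLp_apply, Real.norm_eq_abs, sq_abs]
  rw [hgoal, hFsum]
  calc ‖∑ k, P k‖ ≤ ∑ k : Fin n, ‖P k‖ := norm_sum_le _ _
    _ ≤ ∑ _k : Fin n, δ := Finset.sum_le_sum fun k _ => hnormP k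
    _ = n * δ := by simp [mul_comm]



/-- covering bound for Khatri-Rao products.  If all columns of the
`U i` and `Ubar i` have Euclidean norm at most one, and corresponding columns
differ by at most `ε / (n √R)`, then the Khatri-Rao products differ by at most
`ε` in Frobenius norm. -/
theorem khatriRao_diff_frobenius_le (n R : ℕ) (hn : 0 < n) (hR : 0 < R)
    (d : Fin n → ℕ)
    (U Ubar : ∀ i : Fin n, Matrix (Fin (d i)) (Fin R) ℝ)
    (hU : ∀ i r, Real.sqrt (∑ j, (U i j r) ^ 2) ≤ 1)
    (hUbar : ∀ i r, Real.sqrt (∑ j, (Ubar i j r) ^ 2) ≤ 1)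
    (ε : ℝ)
    (hclose : ∀ i r, Real.sqrt (∑ j, (U i j r - Ubar i j r) ^ 2)
      ≤ ε / (n * Real.sqrt R)) :
    Real.sqrt (∑ x : (∀ i : Fin n, Fin (d i)), ∑ r : Fin R,
        ((∏ i, U i (x i) r) - (∏ i, Ubar i (x i) r)) ^ 2) ≤ ε := by
  have hn' : (0:ℝ) < n := by exact_mod_cast hn
  have hR' : (0:ℝ) < R := by exact_mod_cast hR
  have hsR : (0:ℝ) < Real.sqrt R := Real.sqrt_pos.mpr hR'
  set δ : ℝ := ε / (n * Real.sqrt R) with hδdef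
  have hδ : 0 ≤ δ := le_trans (Real.sqrt_nonneg _) (hclose ⟨0, hn⟩ ⟨0, hR⟩)
  have hε : 0 ≤ ε := by
    have : ε = δ * (n * Real.sqrt R) := by
      rw [hδdef, div_mul_cancel₀]
      positivity
    rw [this]
    positivity
  -- per-column bound
  have hcol : ∀ r : Fin R, ∑ x : (∀ i : Fin n, Fin (d i)),
      ((∏ i, U i (x i) r) - (∏ i, Ubar i (x i) r)) ^ 2 ≤ ε ^ 2 / R := by
    intro r
    have sq_of_sqrt : ∀ (S t : ℝ), 0 ≤ S → Real.sqrt S ≤ t → S ≤ t ^ 2 := by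
      intro S t hS h
      calc S = Real.sqrt S ^ 2 := (Real.sq_sqrt hS).symm
        _ ≤ t ^ 2 := pow_le_pow_left₀ (Real.sqrt_nonneg _) h 2
    have hb := col_bound d (fun i j => U i j r) (fun i j => Ubar i j r) δ hδ
      (fun i => by
        have := sq_of_sqrt _ _ (Finset.sum_nonneg fun j _ => sq_nonneg _) (hU i r)
        simpa using this)
      (fun i => by
        have := sq_of_sqrt _ _ (Finset.sum_nonneg fun j _ => sq_nonneg _) (hUbar i r)
        simpa using this)
      (fun i => sq_of_sqrt _ _ (Finset.sum_nonneg fun j _ => sq_nonneg _) (hclose i r))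
    have hnδ : (n : ℝ) * δ = ε / Real.sqrt R := by
      rw [hδdef]
      field_simp
    rw [hnδ] at hb
    have := sq_of_sqrt _ _ (Finset.sum_nonneg fun x _ => sq_nonneg _) hb
    calc (∑ x : (∀ i : Fin n, Fin (d i)),
          ((∏ i, U i (x i) r) - (∏ i, Ubar i (x i) r)) ^ 2)
        ≤ (ε / Real.sqrt R) ^ 2 := this
      _ = ε ^ 2 / R := by rw [div_pow, Real.sq_sqrt hR'.le]
  calc Real.sqrt (∑ x : (∀ i : Fin n, Fin (d i)), ∑ r : Fin R,
        ((∏ i, U i (x i) r) - (∏ i, Ubar i (x i) r)) ^ 2)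
      = Real.sqrt (∑ r : Fin R, ∑ x : (∀ i : Fin n, Fin (d i)),
        ((∏ i, U i (x i) r) - (∏ i, Ubar i (x i) r)) ^ 2) := by rw [Finset.sum_comm]
    _ ≤ Real.sqrt (∑ _r : Fin R, ε ^ 2 / R) := by
        exact Real.sqrt_le_sqrt (Finset.sum_le_sum fun r _ => hcol r)
    _ = Real.sqrt (ε ^ 2) := by
        rw [Finset.sum_const, Finset.card_univ, Fintype.card_fin, nsmul_eq_mul,
          mul_div_cancel₀ _ (ne_of_gt hR')]
    _ = ε := Real.sqrt_sq hε
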